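/- If a reduced convex body R ⊂ S^d has thickness Δ(R) ≥ π/2, then R is a body of constant width Δ(R), i.e., width_K(R) = Δ(R) for every hemisphere K supporting R. -/

import Mathlib

open Set Metric
open scoped RealInnerProductSpace

noncomputable section

/-- Euclidean space `E^{d+1}`. -/
abbrev E (d : ℕ) := EuclideanSpace ℝ (Fin (d + 1))

/-- The unit sphere `S^d ⊆ E^{d+1}`. -/
def Sph (d : ℕ) : Set (E d) := Metric.sphere (0 : E d) 1

variable {d : ℕ}

/-- Geodesic (angular) distance on the unit sphere. -/
def sdist (x y : E d) : ℝ := Real.arccos ⟪x, y⟫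

/-- Closed hemisphere with center `p`. -/
def Hemi (p : E d) : Set (E d) := {x ∈ Sph d | 0 ≤ ⟪p, x⟫}

/-- Open hemisphere with center `p`. -/
def openHemi (p : E d) : Set (E d) := {x ∈ Sph d | 0 < ⟪p, x⟫}

/-- Boundary great subsphere of the hemisphere with center `p`. -/
def bdHemi (p : E d) : Set (E d) := {x ∈ Sph d | ⟪p, x⟫ = 0}

/-- Spherical convexity: no antipodal pairs, and the nonnegative cone over the
set is convex (equivalent to being closed under shorter arcs). -/
def SphConvex (C : Set (E d)) : Prop :=
  (∀ x ∈ C, -x ∉ C) ∧ Convex ℝ {v : E d | ∃ r : ℝ, 0 ≤ r ∧ ∃ x ∈ C, v = r • x}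

/-- Spherical convex hull: the smallest spherically convex subset of the
sphere containing `A`. -/
def sConvHull (A : Set (E d)) : Set (E d) := ⋂₀ {C | SphConvex C ∧ C ⊆ Sph d ∧ A ⊆ C}

/-- Interior of `C` relative to the sphere. -/
def sInterior (C : Set (E d)) : Set (E d) :=
  {x ∈ Sph d | ∃ ε > 0, Metric.ball x ε ∩ Sph d ⊆ C}

/-- A spherical convex body: closed, spherically convex, with nonempty
interior relative to the sphere. -/
def IsBody (C : Set (E d)) : Prop :=
  C ⊆ Sph d ∧ IsClosed C ∧ SphConvex C ∧ (sInterior C).Nonempty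

/-- Spherical ball of radius `r` centered at `p`. -/
def sBall (p : E d) (r : ℝ) : Set (E d) := {x ∈ Sph d | sdist p x ≤ r}

/-- Normalization of a vector. -/
def nrm (v : E d) : E d := ‖v‖⁻¹ • v

/-- The center of the `(d-1)`-dimensional hemisphere `bd(G) ∩ H`, where `G`, `H`
are the hemispheres centered at `g`, `h`. -/
def cGH (g h : E d) : E d := nrm (h - ⟪g, h⟫ • g)

/-- Thickness of the lune `Hemi g ∩ Hemi h`: the geodesic distance between the
centers of its two bounding `(d-1)`-dimensional hemispheres. -/
def lthick (g h : E d) : ℝ := Real.pi - sdist g h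

/-- The hemisphere centered at `k` supports `C`. -/
def Supports (k : E d) (C : Set (E d)) : Prop :=
  C ⊆ Hemi k ∧ (bdHemi k ∩ C).Nonempty

/-- Width of `C` determined by a supporting hemisphere centered at `k`:
minimal thickness of a lune `K ∩ K*` over supporting hemispheres `K* ≠ K`. -/
def width (C : Set (E d)) (k : E d) : ℝ :=
  sInf {w | ∃ k' ∈ Sph d, k' ≠ k ∧ k' ≠ -k ∧ Supports k' C ∧ w = lthick k k'}

/-- Thickness of `C`: minimal thickness of a lune containing `C`. -/
def thick (C : Set (E d)) : ℝ :=
  sInf {w | ∃ g ∈ Sph d, ∃ h ∈ Sph d, g ≠ h ∧ g ≠ -h ∧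
    C ⊆ Hemi g ∩ Hemi h ∧ w = lthick g h}

/-- Spherical diameter of a set. -/
def sdiam (C : Set (E d)) : ℝ := sSup {r | ∃ x ∈ C, ∃ y ∈ C, r = sdist x y}

/-- Reduced spherical convex body. -/
def Reduced (R : Set (E d)) : Prop :=
  IsBody R ∧ ∀ Z : Set (E d), IsBody Z → Z ⊆ R → Z ≠ R → thick Z < thick R

/-- Extreme point of a spherical convex body. -/
def ExtremePt (C : Set (E d)) (e : E d) : Prop := e ∈ C ∧ SphConvex (C \ {e})

section S18Aux
variable {d : ℕ}

private lemma s18_mem_Sph {x : E d} : x ∈ Sph d ↔ ‖x‖ = 1 := by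
  simp [Sph, mem_sphere_zero_iff_norm]

private lemma s18_inner_le_one {x y : E d} (hx : ‖x‖ = 1) (hy : ‖y‖ = 1) : ⟪x, y⟫ ≤ 1 := by
  have := real_inner_le_norm x y
  rw [hx, hy] at this; linarith

private lemma s18_neg_one_le_inner {x y : E d} (hx : ‖x‖ = 1) (hy : ‖y‖ = 1) : -1 ≤ ⟪x, y⟫ := by
  have := abs_real_inner_le_norm x y
  rw [hx, hy] at this
  have := abs_le.mp this; linarith [this.1]

private lemma s18_arccos_anti {x y : ℝ} (h : x ≤ y) : Real.arccos y ≤ Real.arccos x := by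
  unfold Real.arccos
  have := Real.monotone_arcsin h
  linarith

private lemma s18_arccos_le {θ x : ℝ} (h0 : 0 ≤ θ) (hx : Real.cos θ ≤ x) :
    Real.arccos x ≤ θ := by
  rcases le_or_gt θ Real.pi with hpi | hpi
  · calc Real.arccos x ≤ Real.arccos (Real.cos θ) := s18_arccos_anti hx
      _ = θ := Real.arccos_cos h0 hpi
  · exact le_trans (Real.arccos_le_pi x) hpi.le

private lemma s18_le_arccos {θ x : ℝ} (hθ : θ ≤ Real.pi) (hx : x ≤ Real.cos θ) :
    θ ≤ Real.arccos x := by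
  rcases le_or_gt θ 0 with h0 | h0
  · exact le_trans h0 (Real.arccos_nonneg x)
  · calc θ = Real.arccos (Real.cos θ) := (Real.arccos_cos h0.le hθ).symm
      _ ≤ Real.arccos x := s18_arccos_anti hx

private lemma s18_cos_le_of_arccos_le {x θ : ℝ} (hx : -1 ≤ x) (hx1 : x ≤ 1)
    (h : Real.arccos x ≤ θ) (hθ : θ ≤ Real.pi) : Real.cos θ ≤ x := by
  have h1 : Real.cos θ ≤ Real.cos (Real.arccos x) := by
    rcases eq_or_lt_of_le h with h' | h'
    · rw [h']
    · exact (Real.strictAntiOn_cos ⟨Real.arccos_nonneg x, le_trans h hθ⟩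
        ⟨le_trans (Real.arccos_nonneg x) h, hθ⟩ h').le
  rwa [Real.cos_arccos hx hx1] at h1

private lemma s18_lt_cos_of_arccos {x θ : ℝ} (hx : -1 ≤ x) (hx1 : x ≤ 1)
    (h0 : 0 ≤ θ) (h : θ < Real.arccos x) : x < Real.cos θ := by
  have h1 : Real.cos (Real.arccos x) < Real.cos θ :=
    Real.strictAntiOn_cos ⟨h0, le_trans h.le (Real.arccos_le_pi x)⟩
      ⟨Real.arccos_nonneg x, Real.arccos_le_pi x⟩ h
  rwa [Real.cos_arccos hx hx1] at h1

private lemma s18_nrm_perturb {p w : E d} (hp : ‖p‖ = 1) (hw : ‖w‖ ≤ 1/2) :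
    ‖p + w‖ ≠ 0 ∧ ‖(‖p + w‖⁻¹ • (p + w)) - p‖ ≤ 4 * ‖w‖ := by
  have hN1 : (1 : ℝ) - ‖w‖ ≤ ‖p + w‖ := by
    have h := norm_add_le (p + w) (-w)
    rw [add_neg_cancel_right] at h
    rw [hp, norm_neg] at h
    linarith
  have hNpos : (0:ℝ) < ‖p + w‖ := by linarith
  have hN0 : ‖p + w‖ ≠ 0 := ne_of_gt hNpos
  refine ⟨hN0, ?_⟩
  have key : (‖p + w‖⁻¹ • (p + w)) - p = ‖p + w‖⁻¹ • ((p + w) - ‖p + w‖ • p) := by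
    rw [smul_sub, smul_smul, inv_mul_cancel₀ hN0, one_smul]
  rw [key, norm_smul, norm_inv, Real.norm_eq_abs, abs_of_pos hNpos]
  have h2 : ‖(p + w) - ‖p + w‖ • p‖ ≤ ‖w‖ + |1 - ‖p + w‖| := by
    have : (p + w) - ‖p + w‖ • p = w + (1 - ‖p + w‖) • p := by
      rw [sub_smul, one_smul]; abel
    rw [this]
    calc ‖w + (1 - ‖p + w‖) • p‖ ≤ ‖w‖ + ‖(1 - ‖p + w‖) • p‖ := norm_add_le _ _
      _ = ‖w‖ + |1 - ‖p + w‖| := by rw [norm_smul, Real.norm_eq_abs, hp, mul_one]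
  have h3 : |1 - ‖p + w‖| ≤ ‖w‖ := by
    have := abs_norm_sub_norm_le (p + w) p
    rw [hp] at this
    have : |‖p + w‖ - 1| ≤ ‖p + w - p‖ := by simpa using this
    rw [abs_sub_comm] at this
    simpa using this
  have hNinv : ‖p + w‖⁻¹ ≤ 2 := by
    rw [inv_le_comm₀ hNpos (by norm_num)]
    linarith
  calc ‖p + w‖⁻¹ * ‖(p + w) - ‖p + w‖ • p‖ ≤ 2 * (‖w‖ + ‖w‖) := by
        apply mul_le_mul hNinv (le_trans h2 (by linarith)) (norm_nonneg _) (by norm_num)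
    _ = 4 * ‖w‖ := by ring


private lemma s18_interior_pos {R : Set (E d)} {u p : E d} (hu : ‖u‖ = 1)
    (hRu : ∀ x ∈ R, 0 ≤ ⟪u, x⟫) (hp : p ∈ sInterior R) : 0 < ⟪u, p⟫ := by
  obtain ⟨hpS, ε, hε, hball⟩ := hp
  have hp1 : ‖p‖ = 1 := s18_mem_Sph.mp hpS
  have hpR : p ∈ R := hball ⟨mem_ball_self hε, hpS⟩
  rcases lt_or_eq_of_le (hRu p hpR) with h | h
  · exact h
  · exfalso
    set δ : ℝ := min (ε/8) (1/2) with hδdef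
    have hδpos : 0 < δ := lt_min (by linarith) (by norm_num)
    have hδhalf : δ ≤ 1/2 := min_le_right _ _
    have hδε : 4 * δ < ε := by
      have : δ ≤ ε/8 := min_le_left _ _
      linarith
    have hwnorm : ‖-(δ • u)‖ ≤ 1/2 := by
      rw [norm_neg, norm_smul, Real.norm_eq_abs, abs_of_pos hδpos, hu, mul_one]
      exact hδhalf
    obtain ⟨hN0, hdist⟩ := s18_nrm_perturb hp1 hwnorm
    set v : E d := p + -(δ • u) with hvdef
    set q : E d := ‖v‖⁻¹ • v with hqdef
    have hq1 : ‖q‖ = 1 := by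
      rw [hqdef, norm_smul, norm_inv, Real.norm_eq_abs, abs_norm]
      field_simp
    have hqball : q ∈ Metric.ball p ε := by
      rw [Metric.mem_ball, dist_eq_norm]
      calc ‖q - p‖ ≤ 4 * ‖-(δ • u)‖ := hdist
        _ < ε := by
          rw [norm_neg, norm_smul, Real.norm_eq_abs, abs_of_pos hδpos, hu, mul_one]
          exact hδε
    have hqR : q ∈ R := hball ⟨hqball, s18_mem_Sph.mpr hq1⟩
    have hqpos : 0 ≤ ⟪u, q⟫ := hRu q hqR
    have hval : ⟪u, q⟫ = ‖v‖⁻¹ * (-δ) := by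
      rw [hqdef, real_inner_smul_right, hvdef, inner_add_right, inner_neg_right,
        real_inner_smul_right, ← h, real_inner_self_eq_norm_sq, hu]
      ring
    rw [hval] at hqpos
    have hNpos : 0 < ‖v‖ := lt_of_le_of_ne (norm_nonneg v) (Ne.symm hN0)
    nlinarith [inv_pos.mpr hNpos]

private lemma s18_three_point {k a b : E d} (hk : ‖k‖ = 1) (ha : ‖a‖ = 1) (hb : ‖b‖ = 1)
    {s t : ℝ} (hs0 : 0 ≤ s) (ht0 : 0 ≤ t) (hsa : s ≤ ⟪k, a⟫) (htb : t ≤ ⟪k, b⟫) :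
    s * t - Real.sqrt (1 - s^2) * Real.sqrt (1 - t^2) ≤ ⟪a, b⟫ := by
  set α := ⟪k, a⟫ with hα
  set β := ⟪k, b⟫ with hβ
  set a' : E d := a - α • k with ha'
  set b' : E d := b - β • k with hb'
  have hdecomp : ⟪a, b⟫ = α * β + ⟪a', b'⟫ := by
    rw [ha', hb', inner_sub_right, inner_sub_left, inner_sub_left,
      real_inner_smul_right, real_inner_smul_left, real_inner_smul_left,
      real_inner_smul_right, real_inner_self_eq_norm_sq, hk]
    rw [real_inner_comm k a, ← hα, ← hβ]
    ring
  have hak : (inner ℝ a k : ℝ) = α := (real_inner_comm a k).symm.trans hα.symm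
  have hbk : (inner ℝ b k : ℝ) = β := (real_inner_comm b k).symm.trans hβ.symm
  have hna : ‖a'‖^2 = 1 - α^2 := by
    rw [ha', norm_sub_sq_real, real_inner_smul_right, norm_smul, Real.norm_eq_abs,
      hk, ha, hak]
    rw [mul_one, sq_abs]
    ring
  have hnb : ‖b'‖^2 = 1 - β^2 := by
    rw [hb', norm_sub_sq_real, real_inner_smul_right, norm_smul, Real.norm_eq_abs,
      hk, hb, hbk]
    rw [mul_one, sq_abs]
    ring
  have hα1 : α ≤ 1 := s18_inner_le_one hk ha
  have hβ1 : β ≤ 1 := s18_inner_le_one hk hb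
  have hcs : -(‖a'‖ * ‖b'‖) ≤ ⟪a', b'⟫ := by
    have := abs_real_inner_le_norm a' b'
    have := abs_le.mp this
    linarith [this.1]
  have hna' : ‖a'‖ ≤ Real.sqrt (1 - s^2) := by
    have h1 : ‖a'‖^2 ≤ 1 - s^2 := by rw [hna]; nlinarith
    calc ‖a'‖ = Real.sqrt (‖a'‖^2) := (Real.sqrt_sq (norm_nonneg _)).symm
      _ ≤ Real.sqrt (1 - s^2) := Real.sqrt_le_sqrt h1
  have hnb' : ‖b'‖ ≤ Real.sqrt (1 - t^2) := by
    have h1 : ‖b'‖^2 ≤ 1 - t^2 := by rw [hnb]; nlinarith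
    calc ‖b'‖ = Real.sqrt (‖b'‖^2) := (Real.sqrt_sq (norm_nonneg _)).symm
      _ ≤ Real.sqrt (1 - t^2) := Real.sqrt_le_sqrt h1
  have hprod : ‖a'‖ * ‖b'‖ ≤ Real.sqrt (1 - s^2) * Real.sqrt (1 - t^2) :=
    mul_le_mul hna' hnb' (norm_nonneg _) (Real.sqrt_nonneg _)
  have hst : s * t ≤ α * β := by nlinarith
  linarith [hdecomp]

private lemma s18_cone_closed {R : Set (E d)} (hRc : IsClosed R) (hRs : R ⊆ Sph d) :
    IsClosed {v : E d | ∃ r : ℝ, 0 ≤ r ∧ ∃ x ∈ R, v = r • x} := by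
  apply IsSeqClosed.isClosed
  intro f a hf hfa
  choose r hr x hx hfx using hf
  have hx1 : ∀ n, ‖x n‖ = 1 := fun n => s18_mem_Sph.mp (hRs (hx n))
  have hR_comp : IsCompact R := (isCompact_sphere (0 : E d) 1).of_isClosed_subset hRc hRs
  obtain ⟨y, hyR, φ, hφ, hxy⟩ := hR_comp.tendsto_subseq hx
  have hnorm : ∀ n, ‖f n‖ = r n := by
    intro n
    rw [hfx n, norm_smul, Real.norm_eq_abs, abs_of_nonneg (hr n), hx1 n, mul_one]
  have hrtend : Filter.Tendsto (fun n => r (φ n)) Filter.atTop (nhds ‖a‖) := by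
    have h1 : Filter.Tendsto (fun n => ‖f (φ n)‖) Filter.atTop (nhds ‖a‖) :=
      (continuous_norm.tendsto a).comp (hfa.comp hφ.tendsto_atTop)
    have h2 : (fun n => ‖f (φ n)‖) = fun n => r (φ n) := funext fun n => hnorm (φ n)
    rwa [h2] at h1
  have hlim : Filter.Tendsto (fun n => f (φ n)) Filter.atTop (nhds (‖a‖ • y)) := by
    have h2 : (fun n => f (φ n)) = fun n => r (φ n) • x (φ n) := funext fun n => hfx (φ n)
    rw [h2]
    exact hrtend.smul hxy
  have ha : a = ‖a‖ • y := tendsto_nhds_unique (hfa.comp hφ.tendsto_atTop) hlim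
  exact ⟨‖a‖, norm_nonneg a, y, hyR, ha⟩

private lemma s18_sep {K : Set (E d)} (hKsmul : ∀ c : ℝ, 0 < c → ∀ v ∈ K, c • v ∈ K)
    (hKadd : ∀ v ∈ K, ∀ w ∈ K, v + w ∈ K) (hne : K.Nonempty) (hc : IsClosed K)
    {b : E d} (hb : b ∉ K) : ∃ y : E d, (∀ v ∈ K, 0 ≤ ⟪v, y⟫) ∧ ⟪y, b⟫ < 0 := by
  have h0 : (0 : E d) ∈ K := by
    obtain ⟨v, hv⟩ := hne
    have ht : Filter.Tendsto (fun c : ℝ => c • v) (nhdsWithin 0 (Ioi 0)) (nhds 0) := by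
      have h2 : Filter.Tendsto (fun c : ℝ => c • v) (nhds 0) (nhds ((0:ℝ) • v)) :=
        (by fun_prop : Continuous fun c : ℝ => c • v).tendsto 0
      rw [zero_smul] at h2
      exact h2.mono_left nhdsWithin_le_nhds
    exact hc.mem_of_tendsto ht (eventually_nhdsWithin_of_forall fun c hc' => hKsmul c hc' v hv)
  let K' : ProperCone ℝ (E d) :=
    { carrier := K
      add_mem' := fun {v w} hv hw => hKadd v hv w hw
      zero_mem' := h0
      smul_mem' := fun c {v} hv => by
        rcases eq_or_lt_of_le c.2 with h | h
        · show (c : ℝ) • v ∈ K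
          rw [← h, zero_smul]
          exact h0
        · exact hKsmul c h v hv
      isClosed' := hc }
  have hb' : b ∉ K' := hb
  have hne' : (K' : Set (E d)).Nonempty := hne
  have hc' : IsClosed (K' : Set (E d)) := hc
  obtain ⟨y, hy1, hy2⟩ :=
    ProperCone.hyperplane_separation' K' hb'
  exact ⟨y, fun v hv => hy1 v hv, by rw [real_inner_comm]; exact hy2⟩

private lemma s18_arith1 {c sr cr ny na : ℝ} (hc : 0 < c) (hscon : c < sr * ny)
    (hs0 : 0 < sr) (hc0 : 0 < cr) (hsq : sr^2 = 1 - cr^2) (hna : na^2 = ny^2 - c^2)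
    (hny : 0 ≤ ny) (hna0 : 0 ≤ na) : c * cr - sr * na < 0 := by
  have h1 : c*c < (sr*ny)*(sr*ny) := mul_self_lt_mul_self hc.le hscon
  have h2 : cr^2 * ny^2 < na^2 := by nlinarith [h1, hsq]
  have h3 : cr * ny < na := by
    by_contra hle
    push_neg at hle
    have := mul_self_le_mul_self hna0 hle
    nlinarith
  nlinarith [mul_lt_mul_of_pos_right hscon hc0, mul_lt_mul_of_pos_right h3 hs0]

private lemma s18_ice_dual {k y e : E d} {ρ : ℝ} (hk : ‖k‖ = 1) (he : ‖e‖ = 1)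
    (hek : ⟪k, e⟫ = 0) (hc0 : 0 < Real.cos ρ) (hs0 : 0 < Real.sin ρ) (hs1 : Real.sin ρ < 1)
    (hdual : ∀ b : E d, Real.cos ρ * ‖b‖ ≤ ⟪k, b⟫ → 0 ≤ ⟪b, y⟫) :
    Real.sin ρ * ‖y‖ ≤ ⟪k, y⟫ := by
  by_contra hcon
  push_neg at hcon
  set c : ℝ := ⟪k, y⟫ with hc
  set a : E d := y - c • k with hadef
  have hka : ⟪k, a⟫ = 0 := by
    rw [hadef, inner_sub_right, real_inner_smul_right, real_inner_self_eq_norm_sq, hk]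
    ring
  have hay : ⟪a, y⟫ = ‖y‖^2 - c^2 := by
    rw [hadef, inner_sub_left, real_inner_smul_left, real_inner_self_eq_norm_sq, ← hc]
    ring
  have hnay : ‖a‖^2 = ‖y‖^2 - c^2 := by
    rw [hadef, norm_sub_sq_real, real_inner_smul_right, real_inner_comm k y, ← hc,
      norm_smul, Real.norm_eq_abs, hk, mul_one, sq_abs]
    ring
  have hy0 : y ≠ 0 := by
    intro h
    rw [h] at hcon
    simp at hcon
    have hc0' : c = 0 := by simp [hc, h]
    linarith
  by_cases ha0 : a = 0
  · have hyck : y = c • k := by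
      have := sub_eq_zero.mp (hadef ▸ ha0)
      exact this
    have hnc : ‖y‖ = |c| := by rw [hyck, norm_smul, Real.norm_eq_abs, hk, mul_one]
    have hcneg : c < 0 := by
      rcases lt_trichotomy c 0 with h | h | h
      · exact h
      · exfalso; rw [hnc, h] at hcon; simp at hcon
      · exfalso
        rw [hnc, abs_of_pos h] at hcon
        nlinarith
    set b : E d := Real.cos ρ • k + Real.sin ρ • e with hbdef
    have hkb : ⟪k, b⟫ = Real.cos ρ := by
      rw [hbdef, inner_add_right, real_inner_smul_right, real_inner_smul_right,
        real_inner_self_eq_norm_sq, hk, hek]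
      ring
    have hnb : ‖b‖ = 1 := by
      have h2 : ‖b‖^2 = 1 := by
        rw [hbdef, norm_add_sq_real, real_inner_smul_left, real_inner_smul_right, hek,
          norm_smul, norm_smul, Real.norm_eq_abs, Real.norm_eq_abs, hk, he,
          abs_of_pos hc0, abs_of_pos hs0]
        linear_combination Real.sin_sq_add_cos_sq ρ
      have h3 : (‖b‖ - 1) * (‖b‖ + 1) = 0 := by nlinarith
      rcases mul_eq_zero.mp h3 with h | h
      · linarith
      · linarith [norm_nonneg b]
    have hby : ⟪b, y⟫ = c * Real.cos ρ := by
      rw [hyck, real_inner_smul_right, ← real_inner_comm b k, hkb]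
    have := hdual b (by rw [hnb, hkb, mul_one])
    rw [hby] at this
    nlinarith
  · have hna0 : 0 < ‖a‖ := norm_pos_iff.mpr ha0
    set b : E d := Real.cos ρ • k - (Real.sin ρ / ‖a‖) • a with hbdef
    have hkb : ⟪k, b⟫ = Real.cos ρ := by
      rw [hbdef, inner_sub_right, real_inner_smul_right, real_inner_smul_right,
        real_inner_self_eq_norm_sq, hk, hka]
      ring
    have hnb : ‖b‖ = 1 := by
      have h2 : ‖b‖^2 = 1 := by
        rw [hbdef, norm_sub_sq_real, real_inner_smul_left, real_inner_smul_right, hka,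
          norm_smul, norm_smul, Real.norm_eq_abs, Real.norm_eq_abs, hk,
          abs_of_pos hc0, abs_of_pos (div_pos hs0 hna0)]
        rw [div_mul_cancel₀ _ (ne_of_gt hna0)]
        linear_combination Real.sin_sq_add_cos_sq ρ
      have h3 : (‖b‖ - 1) * (‖b‖ + 1) = 0 := by nlinarith
      rcases mul_eq_zero.mp h3 with h | h
      · linarith
      · linarith [norm_nonneg b]
    have hby : ⟪b, y⟫ = c * Real.cos ρ - Real.sin ρ * ‖a‖ := by
      rw [hbdef, inner_sub_left, real_inner_smul_left, real_inner_smul_left,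
        ← hc, hay, ← hnay]
      field_simp
    have hlt : ⟪b, y⟫ < 0 := by
      rw [hby]
      rcases le_or_gt c 0 with h | h
      · have : c * Real.cos ρ ≤ 0 := mul_nonpos_of_nonpos_of_nonneg h hc0.le
        linarith [mul_pos hs0 hna0]
      · exact s18_arith1 h hcon hs0 hc0 (Real.sin_sq ρ) hnay (norm_nonneg y) (norm_nonneg a)
    have := hdual b (by rw [hnb, hkb, mul_one])
    linarith

private lemma s18_arith2 {m t N : ℝ} (h : m*N ≤ m - t) (hN1 : N ≤ 1 + t) (ht : 0 < t)
    (hm1 : -1 < m) (hm0 : m ≤ 0) : False := by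
  have h1 : m * (1 + t) ≤ m * N := mul_le_mul_of_nonpos_left hN1 hm0
  nlinarith

private lemma s18_arith3 {m t N : ℝ} (h : m*N ≤ m - t) (hN2 : N^2 = 1 - 2*t*m + t^2)
    (hN0 : 0 ≤ N) (ht : 0 < t) (htm : t < m) (hm1 : m < 1) : False := by
  have h1 : 0 ≤ m * N := mul_nonneg (by linarith) hN0
  have h2 := mul_self_le_mul_self h1 h
  nlinarith [mul_pos (mul_pos ht (by nlinarith : (0:ℝ) < 1 - m^2)) (by linarith : 0 < 2*m - t)]

end S18Aux

set_option maxHeartbeats 2000000 in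
/-- a reduced spherical body of thickness at least `π/2` is a
body of constant width `Δ(R)`. -/
theorem stmt18 {d : ℕ} (R : Set (E d)) (hR : Reduced R)
    (hth : Real.pi / 2 ≤ thick R) :
    ∀ k ∈ Sph d, Supports k R → width R k = thick R := by
  intro k hkS hksup
  obtain ⟨hRbody, hRmin⟩ := hR
  obtain ⟨hRs, hRc, hRconv, p, hpInt⟩ := hRbody
  obtain ⟨hRk, x, hxbd, hxR⟩ := hksup
  have hk1 : ‖k‖ = 1 := s18_mem_Sph.mp hkS
  have hx1 : ‖x‖ = 1 := s18_mem_Sph.mp hxbd.1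
  have hxk : ⟪k, x⟫ = 0 := hxbd.2
  have hpS : p ∈ Sph d := hpInt.1
  have hp1 : ‖p‖ = 1 := s18_mem_Sph.mp hpS
  obtain ⟨ε₁, hε₁, hball₁⟩ := hpInt.2
  have hpR : p ∈ R := hball₁ ⟨mem_ball_self hε₁, hpS⟩
  have hRuiff : ∀ u : E d, R ⊆ Hemi u ↔ ∀ z ∈ R, 0 ≤ ⟪u, z⟫ :=
    fun u => ⟨fun h z hz => (h hz).2, fun h z hz => ⟨hRs hz, h z hz⟩⟩
  have hRkin : ∀ z ∈ R, 0 ≤ ⟪k, z⟫ := fun z hz => (hRk hz).2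
  set T : Set ℝ := {w | ∃ g ∈ Sph d, ∃ h ∈ Sph d, g ≠ h ∧ g ≠ -h ∧
    R ⊆ Hemi g ∩ Hemi h ∧ w = lthick g h} with hTdef
  have hthickT : thick R = sInf T := rfl
  have hTbdd : BddBelow T := by
    refine ⟨0, ?_⟩
    rintro w ⟨g, hgS, h, hhS, hgh, hgnh, hsub, rfl⟩
    unfold lthick sdist
    linarith [Real.arccos_le_pi (⟪g, h⟫ : ℝ)]
  have hTne : T.Nonempty := by
    by_contra hne
    rw [not_nonempty_iff_eq_empty] at hne
    rw [hthickT, hne, Real.sInf_empty] at hth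
    linarith [Real.pi_pos]
  have hΔleT : ∀ w ∈ T, thick R ≤ w := fun w hw => hthickT ▸ csInf_le hTbdd hw
  have hΔpos : 0 < thick R := by linarith [Real.pi_pos]
  have hΔπ : thick R < Real.pi := by
    by_contra hge
    push_neg at hge
    obtain ⟨w, hw⟩ := hTne
    obtain ⟨g, hgS, h, hhS, hgh, hgnh, hsub, hwv⟩ := hw
    have hg1 : ‖g‖ = 1 := s18_mem_Sph.mp hgS
    have hh1 : ‖h‖ = 1 := s18_mem_Sph.mp hhS
    have h1 : thick R ≤ w := hΔleT _ ⟨g, hgS, h, hhS, hgh, hgnh, hsub, hwv⟩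
    have h2 : Real.arccos ⟪g, h⟫ ≤ 0 := by
      rw [hwv] at h1
      unfold lthick sdist at h1
      linarith
    have h3 : Real.arccos ⟪g, h⟫ = 0 := le_antisymm h2 (Real.arccos_nonneg _)
    have h4 : (⟪g, h⟫ : ℝ) = 1 := by
      have h5 := Real.cos_arccos (s18_neg_one_le_inner hg1 hh1) (s18_inner_le_one hg1 hh1)
      rw [h3, Real.cos_zero] at h5
      exact h5.symm
    exact hgh ((inner_eq_one_iff_of_norm_eq_one hg1 hh1).mp h4)
  set c0 : ℝ := Real.cos (Real.pi - thick R) with hc0def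
  have hc00 : 0 ≤ c0 := Real.cos_nonneg_of_mem_Icc ⟨by linarith, by linarith⟩
  have hc01 : c0 < 1 := by
    have h1 := Real.strictAntiOn_cos (Set.mem_Icc.mpr ⟨le_refl 0, Real.pi_pos.le⟩)
      (Set.mem_Icc.mpr ⟨by linarith, by linarith⟩) (by linarith : (0:ℝ) < Real.pi - thick R)
    rw [Real.cos_zero] at h1
    exact hc0def ▸ h1
  have hA : ∀ u, u ∈ Sph d → (∀ z ∈ R, 0 ≤ ⟪u, z⟫) →
      ∀ v, v ∈ Sph d → (∀ z ∈ R, 0 ≤ ⟪v, z⟫) → c0 ≤ ⟪u, v⟫ := by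
    intro u huS hu v hvS hv
    have hu1 := s18_mem_Sph.mp huS
    have hv1 := s18_mem_Sph.mp hvS
    by_cases huv : u = v
    · subst huv
      have : (⟪u, u⟫ : ℝ) = 1 := by
        rw [real_inner_self_eq_norm_sq, hu1]; norm_num
      rw [this]; linarith
    · by_cases hunv : u = -v
      · exfalso
        have h1 : 0 < ⟪v, p⟫ := s18_interior_pos hv1 hv ⟨hpS, ε₁, hε₁, hball₁⟩
        have h2 : 0 < ⟪u, p⟫ := s18_interior_pos hu1 hu ⟨hpS, ε₁, hε₁, hball₁⟩
        rw [hunv, inner_neg_left] at h2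
        linarith
      · have hw : lthick u v ∈ T :=
          ⟨u, huS, v, hvS, huv, hunv,
            subset_inter ((hRuiff u).mpr hu) ((hRuiff v).mpr hv), rfl⟩
        have h1 := hΔleT _ hw
        unfold lthick sdist at h1
        have h2 : Real.arccos ⟪u, v⟫ ≤ Real.pi - thick R := by linarith
        exact s18_cos_le_of_arccos_le (s18_neg_one_le_inner hu1 hv1)
          (s18_inner_le_one hu1 hv1) h2 (by linarith)
  -- main claim
  suffices hstar : ∃ k' : E d, k' ∈ Sph d ∧ (∀ z ∈ R, 0 ≤ ⟪k', z⟫) ∧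
      (bdHemi k' ∩ R).Nonempty ∧ ⟪k, k'⟫ ≤ c0 by
    obtain ⟨k', hk'S, hk'P, hk'touch, hk'c⟩ := hstar
    have hk'1 : ‖k'‖ = 1 := s18_mem_Sph.mp hk'S
    have hk'nk : k' ≠ k := by
      intro h
      rw [h, real_inner_self_eq_norm_sq, hk1] at hk'c
      norm_num at hk'c
      linarith
    have hk'nnk : k' ≠ -k := by
      intro h
      have h1 : 0 < ⟪k, p⟫ := s18_interior_pos hk1 hRkin ⟨hpS, ε₁, hε₁, hball₁⟩
      have h2 : 0 < ⟪k', p⟫ := s18_interior_pos hk'1 hk'P ⟨hpS, ε₁, hε₁, hball₁⟩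
      rw [h, inner_neg_left] at h2
      linarith
    set S : Set ℝ := {w | ∃ k'' ∈ Sph d, k'' ≠ k ∧ k'' ≠ -k ∧ Supports k'' R ∧
      w = lthick k k''} with hSdef
    have hwidthS : width R k = sInf S := rfl
    have hk'sup : Supports k' R := ⟨(hRuiff k').mpr hk'P, hk'touch⟩
    have hSmem : lthick k k' ∈ S := ⟨k', hk'S, hk'nk, hk'nnk, hk'sup, rfl⟩
    have hSsubT : S ⊆ T := by
      rintro w ⟨k'', hk''S, hne1, hne2, hsup'', rfl⟩
      refine ⟨k, hkS, k'', hk''S, fun h => hne1 h.symm, ?_, subset_inter hRk hsup''.1, rfl⟩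
      intro h
      apply hne2
      rw [h, neg_neg]
    have hwle : lthick k k' ≤ thick R := by
      unfold lthick sdist
      have h1 : Real.pi - thick R ≤ Real.arccos ⟪k, k'⟫ :=
        s18_le_arccos (by linarith) (hc0def ▸ hk'c)
      linarith
    have hge : thick R ≤ width R k := by
      rw [hwidthS, hthickT]
      exact csInf_le_csInf hTbdd ⟨_, hSmem⟩ hSsubT
    have hle : width R k ≤ thick R := by
      rw [hwidthS]
      exact le_trans (csInf_le (hTbdd.mono hSsubT) hSmem) hwle
    linarith
  -- ===== proof of hstar by contradiction =====
  by_contra hns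
  push_neg at hns
  set P : Set (E d) := {u | u ∈ Sph d ∧ ∀ z ∈ R, 0 ≤ ⟪u, z⟫} with hPdef
  have hPclosed : IsClosed P := by
    have h1 : IsClosed {u : E d | ∀ z ∈ R, 0 ≤ ⟪u, z⟫} := by
      have he : {u : E d | ∀ z ∈ R, 0 ≤ ⟪u, z⟫} = ⋂ z ∈ R, {u : E d | 0 ≤ ⟪u, z⟫} := by
        ext u; simp
      rw [he]
      refine isClosed_biInter fun z _ => isClosed_le continuous_const ?_
      exact Continuous.inner continuous_id continuous_const
    exact Metric.isClosed_sphere.inter h1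
  have hPsub : P ⊆ Sph d := fun u hu => hu.1
  have hPcomp : IsCompact P := (isCompact_sphere (0 : E d) 1).of_isClosed_subset hPclosed hPsub
  have hPne : P.Nonempty := ⟨k, hkS, hRkin⟩
  have hctsk : Continuous fun uu : E d => (⟪k, uu⟫ : ℝ) :=
    Continuous.inner continuous_const continuous_id
  obtain ⟨ks, hksP, hksmin⟩ := hPcomp.exists_isMinOn hPne hctsk.continuousOn
  have hμmin : ∀ u ∈ P, ⟪k, ks⟫ ≤ ⟪k, u⟫ := fun u hu => hksmin hu
  set μ : ℝ := ⟪k, ks⟫ with hμdef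
  have hks1 : ‖ks‖ = 1 := s18_mem_Sph.mp hksP.1
  have hRcomp : IsCompact R := (isCompact_sphere (0 : E d) 1).of_isClosed_subset hRc hRs
  have hRne : R.Nonempty := ⟨p, hpR⟩
  have hμle1 : μ ≤ 1 := s18_inner_le_one hk1 hks1
  have hμn1 : -1 < μ := by
    rcases lt_or_eq_of_le (s18_neg_one_le_inner hk1 hks1) with h | h
    · exact h
    · exfalso
      have hksnk : ks = -k := by
        have hnn : ‖ks + k‖^2 = 0 := by
          rw [norm_add_sq_real, hks1, hk1, ← real_inner_comm ks k, ← h]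
          ring
        have h2 : ‖ks + k‖ = 0 := by nlinarith [norm_nonneg (ks + k)]
        exact eq_neg_of_add_eq_zero_left (norm_eq_zero.mp h2)
      have h1 : 0 < ⟪k, p⟫ := s18_interior_pos hk1 hRkin ⟨hpS, ε₁, hε₁, hball₁⟩
      have h2 : 0 < ⟪ks, p⟫ := s18_interior_pos hks1 hksP.2 ⟨hpS, ε₁, hε₁, hball₁⟩
      rw [hksnk, inner_neg_left] at h2
      linarith
  -- the minimizer is a supporting hemisphere (touches R)
  have hkstouch : (bdHemi ks ∩ R).Nonempty := by
    by_cases hksk : ks = k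
    · exact ⟨x, by rw [hksk]; exact hxbd, hxR⟩
    by_contra hnt
    rw [not_nonempty_iff_eq_empty] at hnt
    have hkspos : ∀ z ∈ R, 0 < ⟪ks, z⟫ := by
      intro z hz
      rcases lt_or_eq_of_le (hksP.2 z hz) with h | h
      · exact h
      · exfalso
        have hmem : z ∈ bdHemi ks ∩ R := ⟨⟨hRs hz, h.symm⟩, hz⟩
        rw [hnt] at hmem
        exact hmem
    have hctsks : Continuous fun zz : E d => (⟪ks, zz⟫ : ℝ) :=
      Continuous.inner continuous_const continuous_id
    obtain ⟨z₀, hz₀R, hz₀min⟩ := hRcomp.exists_isMinOn hRne hctsks.continuousOn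
    have hδmin : ∀ z ∈ R, ⟪ks, z₀⟫ ≤ ⟪ks, z⟫ := fun z hz => hz₀min hz
    set δ : ℝ := ⟪ks, z₀⟫ with hδdef
    have hδpos : 0 < δ := hkspos z₀ hz₀R
    have hμ1 : μ < 1 := by
      rcases lt_or_eq_of_le hμle1 with h | h
      · exact h
      · exact absurd ((inner_eq_one_iff_of_norm_eq_one hk1 hks1).mp (hμdef.symm.trans h)).symm hksk
    have hstep : ∀ t : ℝ, 0 < t → t ≤ δ → t < 1 →
        μ * ‖ks - t • k‖ ≤ μ - t ∧ 0 < ‖ks - t • k‖ ∧ ‖ks - t • k‖ ≤ 1 + t ∧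
        ‖ks - t • k‖^2 = 1 - 2*t*μ + t^2 := by
      intro t ht0 htδ ht1
      have hv0 : ks - t • k ≠ 0 := by
        intro hv
        have h1 : ks = t • k := sub_eq_zero.mp hv
        have h2 : (1:ℝ) = t := by
          have h3 := congrArg norm h1
          rwa [hks1, norm_smul, Real.norm_eq_abs, hk1, mul_one, abs_of_pos ht0] at h3
        linarith
      have hN : 0 < ‖ks - t • k‖ := norm_pos_iff.mpr hv0
      have hmem : (‖ks - t • k‖⁻¹ • (ks - t • k)) ∈ P := by
        constructor
        · refine s18_mem_Sph.mpr ?_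
          rw [norm_smul, norm_inv, Real.norm_eq_abs, abs_norm]
          field_simp
        · intro z hz
          rw [real_inner_smul_left]
          have hz1 : ‖z‖ = 1 := s18_mem_Sph.mp (hRs hz)
          have h2 : ⟪ks - t • k, z⟫ = ⟪ks, z⟫ - t * ⟪k, z⟫ := by
            rw [inner_sub_left, real_inner_smul_left]
          have h4 : δ ≤ ⟪ks, z⟫ := hδmin z hz
          have h5 : ⟪k, z⟫ ≤ 1 := s18_inner_le_one hk1 hz1
          have h3 : 0 ≤ ⟪ks - t • k, z⟫ := by rw [h2]; nlinarith
          exact mul_nonneg (by positivity) h3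
      have h6 := hμmin _ hmem
      rw [real_inner_smul_right] at h6
      have h7 : ⟪k, ks - t • k⟫ = μ - t := by
        rw [inner_sub_right, real_inner_smul_right, real_inner_self_eq_norm_sq, hk1, ← hμdef]
        ring
      rw [h7] at h6
      have h8 := mul_le_mul_of_nonneg_right h6 hN.le
      have h9 : (‖ks - t • k‖⁻¹ * (μ - t)) * ‖ks - t • k‖ = μ - t := by
        field_simp
      rw [h9] at h8
      refine ⟨h8, hN, ?_, ?_⟩
      · calc ‖ks - t • k‖ ≤ ‖ks‖ + ‖t • k‖ := norm_sub_le _ _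
          _ = 1 + t := by
            rw [hks1, norm_smul, Real.norm_eq_abs, hk1, mul_one, abs_of_pos ht0]
      · rw [norm_sub_sq_real, real_inner_smul_right, ← real_inner_comm ks k, ← hμdef,
          norm_smul, Real.norm_eq_abs, hk1, hks1, mul_one, sq_abs]
        ring
    rcases le_or_gt μ 0 with hμ0 | hμ0
    · have ht0 : 0 < min δ (1/2 : ℝ) := lt_min hδpos (by norm_num)
      obtain ⟨ha, hb, hc, -⟩ := hstep (min δ (1/2)) ht0 (min_le_left _ _)
        (lt_of_le_of_lt (min_le_right _ _) (by norm_num))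
      exact s18_arith2 ha hc ht0 hμn1 hμ0
    · have ht0 : 0 < min δ (μ/2 : ℝ) := lt_min hδpos (by linarith)
      have htμ : min δ (μ/2) < μ := lt_of_le_of_lt (min_le_right _ _) (by linarith)
      obtain ⟨ha, hb, -, hd⟩ := hstep (min δ (μ/2)) ht0 (min_le_left _ _) (by linarith)
      exact s18_arith3 ha hd hb.le ht0 htμ hμ1
  -- apply the contradiction hypothesis to the minimizer
  have hμc : c0 < μ := hns ks hksP.1 hksP.2 hkstouch
  have hμ0 : 0 ≤ μ := le_trans hc00 hμc.le
  have hpk : 0 < ⟪k, p⟫ := s18_interior_pos hk1 hRkin ⟨hpS, ε₁, hε₁, hball₁⟩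
  -- choose the cutting parameter ρ
  obtain ⟨ρ, hρ0, hρ1, hcond1, hcond2, hcond3⟩ :
      ∃ ρ : ℝ, 0 < ρ ∧ ρ < 1 ∧
        c0 ≤ Real.cos ρ * Real.cos ρ - Real.sin ρ * Real.sin ρ ∧
        c0 ≤ μ * Real.cos ρ - Real.sqrt (1 - μ^2) * Real.sin ρ ∧
        Real.sin ρ < ⟪k, p⟫ := by
    have hf1 : Filter.Tendsto
        (fun s : ℝ => Real.cos s * Real.cos s - Real.sin s * Real.sin s) (nhds 0) (nhds 1) := by
      have hc := ((Real.continuous_cos.mul Real.continuous_cos).sub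
        (Real.continuous_sin.mul Real.continuous_sin)).tendsto 0
      convert hc using 2
      simp only [Pi.sub_apply, Pi.mul_apply, Real.cos_zero, Real.sin_zero]
      norm_num
    have hf2 : Filter.Tendsto
        (fun s : ℝ => μ * Real.cos s - Real.sqrt (1 - μ^2) * Real.sin s) (nhds 0) (nhds μ) := by
      have hc : Filter.Tendsto
          (fun s : ℝ => μ * Real.cos s - Real.sqrt (1 - μ^2) * Real.sin s) (nhds 0)
          (nhds (μ * Real.cos 0 - Real.sqrt (1 - μ^2) * Real.sin 0)) :=
        (((continuous_const (y := μ)).mul Real.continuous_cos).sub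
          ((continuous_const (y := Real.sqrt (1 - μ^2))).mul Real.continuous_sin)).tendsto 0
      simpa using hc
    have hf3 : Filter.Tendsto Real.sin (nhds 0) (nhds 0) := by
      have hc := Real.continuous_sin.tendsto 0
      simpa using hc
    have e1 := hf1.eventually (eventually_gt_nhds hc01)
    have e2 := hf2.eventually (eventually_gt_nhds hμc)
    have e3 := hf3.eventually (eventually_lt_nhds hpk)
    obtain ⟨r0, hr0, hr⟩ := Metric.eventually_nhds_iff.mp ((e1.and e2).and e3)
    refine ⟨min (r0/2) (1/2), lt_min (by linarith) (by norm_num),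
      lt_of_le_of_lt (min_le_right _ _) (by norm_num), ?_, ?_, ?_⟩
    all_goals {
      have hd : dist (min (r0/2) (1/2)) 0 < r0 := by
        rw [Real.dist_eq, sub_zero, abs_of_pos (lt_min (by linarith) (by norm_num))]
        calc min (r0/2) (1/2) ≤ r0/2 := min_le_left _ _
          _ < r0 := by linarith
      have := hr hd
      first
       | exact this.1.1.le
       | exact this.1.2.le
       | exact this.2 }
  have hπ2 : (1:ℝ) < Real.pi / 2 := by nlinarith [Real.pi_gt_three]
  have hcosρ : 0 < Real.cos ρ := Real.cos_pos_of_mem_Ioo ⟨by linarith, by linarith⟩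
  have hsinρ : 0 < Real.sin ρ := Real.sin_pos_of_pos_of_lt_pi hρ0 (by nlinarith [Real.pi_gt_three])
  have hsinρ1 : Real.sin ρ < 1 := lt_trans (Real.sin_lt hρ0) hρ1
  -- the cut body Z
  set Zb : Set (E d) := R ∩ sBall k (Real.pi/2 - ρ) with hZdef
  have hsBallmem : ∀ z, z ∈ R → (z ∈ Zb ↔ Real.sin ρ ≤ ⟪k, z⟫) := by
    intro z hz
    have hz1 : ‖z‖ = 1 := s18_mem_Sph.mp (hRs hz)
    constructor
    · rintro ⟨-, -, h2⟩
      have h3 : Real.cos (Real.pi/2 - ρ) ≤ ⟪k, z⟫ :=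
        s18_cos_le_of_arccos_le (s18_neg_one_le_inner hk1 hz1)
          (s18_inner_le_one hk1 hz1) h2 (by linarith [Real.pi_pos])
      rwa [Real.cos_pi_div_two_sub] at h3
    · intro h
      refine ⟨hz, hRs hz, ?_⟩
      refine s18_arccos_le (by linarith) ?_
      rwa [Real.cos_pi_div_two_sub]
  have hpZ : p ∈ Zb := (hsBallmem p hpR).mpr hcond3.le
  have hiceconv : Convex ℝ {v : E d | Real.sin ρ * ‖v‖ ≤ ⟪k, v⟫} := by
    intro v hv w hw a b ha hb hab
    simp only [Set.mem_setOf_eq] at hv hw ⊢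
    rw [inner_add_right, real_inner_smul_right, real_inner_smul_right]
    have h1 : ‖a • v + b • w‖ ≤ a * ‖v‖ + b * ‖w‖ := by
      calc ‖a • v + b • w‖ ≤ ‖a • v‖ + ‖b • w‖ := norm_add_le _ _
        _ = a * ‖v‖ + b * ‖w‖ := by
          rw [norm_smul, norm_smul, Real.norm_eq_abs, Real.norm_eq_abs,
            abs_of_nonneg ha, abs_of_nonneg hb]
    nlinarith [mul_le_mul_of_nonneg_left h1 hsinρ.le,
      mul_le_mul_of_nonneg_left hv ha, mul_le_mul_of_nonneg_left hw hb]
  have hconeZ : {v : E d | ∃ r : ℝ, 0 ≤ r ∧ ∃ z ∈ Zb, v = r • z} =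
      {v : E d | ∃ r : ℝ, 0 ≤ r ∧ ∃ z ∈ R, v = r • z} ∩
        {v : E d | Real.sin ρ * ‖v‖ ≤ ⟪k, v⟫} := by
    ext v
    constructor
    · rintro ⟨r, hr, z, hzZ, rfl⟩
      have hzR : z ∈ R := hzZ.1
      have hz1 : ‖z‖ = 1 := s18_mem_Sph.mp (hRs hzR)
      refine ⟨⟨r, hr, z, hzR, rfl⟩, ?_⟩
      simp only [Set.mem_setOf_eq]
      rw [norm_smul, Real.norm_eq_abs, abs_of_nonneg hr, hz1, mul_one, real_inner_smul_right]
      have h2 := (hsBallmem z hzR).mp hzZ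
      nlinarith
    · rintro ⟨⟨r, hr, z, hzR, rfl⟩, hice⟩
      rcases eq_or_lt_of_le hr with h0 | h0
      · exact ⟨0, le_refl 0, p, hpZ, by rw [← h0, zero_smul, zero_smul]⟩
      · refine ⟨r, hr, z, ?_, rfl⟩
        rw [hsBallmem z hzR]
        have hz1 : ‖z‖ = 1 := s18_mem_Sph.mp (hRs hzR)
        simp only [Set.mem_setOf_eq] at hice
        rw [norm_smul, Real.norm_eq_abs, abs_of_nonneg hr, hz1, mul_one,
          real_inner_smul_right] at hice
        nlinarith
  have hZbody : IsBody Zb := by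
    refine ⟨fun z hz => hRs hz.1, ?_, ⟨?_, ?_⟩, ?_⟩
    · refine hRc.inter ?_
      have he : sBall k (Real.pi/2 - ρ) = Sph d ∩ {z : E d | sdist k z ≤ Real.pi/2 - ρ} := rfl
      rw [he]
      refine Metric.isClosed_sphere.inter (isClosed_le ?_ continuous_const)
      exact Real.continuous_arccos.comp (Continuous.inner continuous_const continuous_id)
    · intro z hz hz2
      exact (hRconv.1 z hz.1) hz2.1
    · rw [hconeZ]
      exact hRconv.2.inter hiceconv
    · refine ⟨p, hpS, min ε₁ (⟪k, p⟫ - Real.sin ρ), lt_min hε₁ (by linarith), ?_⟩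
      rintro q ⟨hqball, hqS⟩
      have hqR : q ∈ R := hball₁ ⟨Metric.ball_subset_ball (min_le_left _ _) hqball, hqS⟩
      have h1 : ‖q - p‖ < min ε₁ (⟪k, p⟫ - Real.sin ρ) := by
        rwa [Metric.mem_ball, dist_eq_norm] at hqball
      have h2 : |⟪k, q - p⟫| ≤ ‖q - p‖ := by
        have h3 := abs_real_inner_le_norm k (q - p)
        rwa [hk1, one_mul] at h3
      have h3 : ⟪k, q⟫ = ⟪k, p⟫ + ⟪k, q - p⟫ := by rw [inner_sub_right]; ring
      have h4 := (abs_le.mp h2).1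
      have h5 : Real.sin ρ ≤ ⟪k, q⟫ := by
        have h6 := lt_of_lt_of_le h1 (min_le_right ε₁ _)
        linarith
      exact (hsBallmem q hqR).mpr h5
  have hZsub : Zb ⊆ R := fun z hz => hz.1
  have hZne : Zb ≠ R := by
    intro h
    have hxZ : x ∈ Zb := h ▸ hxR
    have h2 := (hsBallmem x hxR).mp hxZ
    rw [hxk] at h2
    linarith
  have hthZ : thick Zb < thick R := hRmin Zb hZbody hZsub hZne
  set TZ : Set ℝ := {w | ∃ g ∈ Sph d, ∃ h ∈ Sph d, g ≠ h ∧ g ≠ -h ∧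
    Zb ⊆ Hemi g ∩ Hemi h ∧ w = lthick g h} with hTZdef
  have hthickTZ : thick Zb = sInf TZ := rfl
  have hTZne : TZ.Nonempty := by
    obtain ⟨w, g, hgS, h, hhS, h1, h2, h3, h4⟩ := hTne
    exact ⟨w, g, hgS, h, hhS, h1, h2, subset_trans hZsub h3, h4⟩
  obtain ⟨w, hwTZ, hwlt⟩ := exists_lt_of_csInf_lt hTZne (by rw [← hthickTZ]; exact hthZ)
  obtain ⟨u, huS, v, hvS, huv, hunv, hZuv, rfl⟩ := hwTZ
  have hu1 : ‖u‖ = 1 := s18_mem_Sph.mp huS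
  have hv1 : ‖v‖ = 1 := s18_mem_Sph.mp hvS
  have huvlt : (⟪u, v⟫ : ℝ) < c0 := by
    unfold lthick sdist at hwlt
    have h2 : Real.pi - thick R < Real.arccos ⟪u, v⟫ := by linarith
    exact s18_lt_cos_of_arccos (s18_neg_one_le_inner hu1 hv1)
      (s18_inner_le_one hu1 hv1) (by linarith) h2
  -- dual cone machinery
  set Ad : Set (E d) := {a | ∀ z ∈ R, 0 ≤ ⟪a, z⟫} with hAdef
  set Bd : Set (E d) := {b | Real.cos ρ * ‖b‖ ≤ ⟪k, b⟫} with hBdef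
  set ABd : Set (E d) := {m | ∃ a ∈ Ad, ∃ b ∈ Bd, m = a + b} with hABdef
  have hAsmul : ∀ c : ℝ, 0 ≤ c → ∀ a ∈ Ad, c • a ∈ Ad := by
    intro c hc a ha z hz
    rw [real_inner_smul_left]
    exact mul_nonneg hc (ha z hz)
  have hAadd : ∀ a ∈ Ad, ∀ a' ∈ Ad, a + a' ∈ Ad := by
    intro a ha a' ha' z hz
    rw [inner_add_left]
    exact add_nonneg (ha z hz) (ha' z hz)
  have hBsmul : ∀ c : ℝ, 0 ≤ c → ∀ b ∈ Bd, c • b ∈ Bd := by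
    intro c hc b hb
    simp only [hBdef, Set.mem_setOf_eq] at hb ⊢
    rw [norm_smul, real_inner_smul_right, Real.norm_eq_abs, abs_of_nonneg hc]
    nlinarith
  have hBadd : ∀ b ∈ Bd, ∀ b' ∈ Bd, b + b' ∈ Bd := by
    intro b hb b' hb'
    simp only [hBdef, Set.mem_setOf_eq] at hb hb' ⊢
    rw [inner_add_right]
    have h1 := norm_add_le b b'
    nlinarith
  have h0A : (0 : E d) ∈ Ad := fun z _ => by simp
  have h0B : (0 : E d) ∈ Bd := by simp [hBdef]
  have hABsmul : ∀ c : ℝ, 0 < c → ∀ m ∈ ABd, c • m ∈ ABd := by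
    rintro c hc m ⟨a, ha, b, hb, rfl⟩
    exact ⟨c • a, hAsmul c hc.le a ha, c • b, hBsmul c hc.le b hb, by rw [smul_add]⟩
  have hABadd : ∀ m ∈ ABd, ∀ m' ∈ ABd, m + m' ∈ ABd := by
    rintro m ⟨a, ha, b, hb, rfl⟩ m' ⟨a', ha', b', hb', rfl⟩
    exact ⟨a + a', hAadd a ha a' ha', b + b', hBadd b hb b' hb', by abel⟩
  have hMsmul : ∀ c : ℝ, 0 < c → ∀ m ∈ closure ABd, c • m ∈ closure ABd := by
    intro c hc m hm
    rw [mem_closure_iff_seq_limit] at hm ⊢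
    obtain ⟨f, hf, hft⟩ := hm
    exact ⟨fun n => c • f n, fun n => hABsmul c hc _ (hf n), hft.const_smul c⟩
  have hMadd : ∀ m ∈ closure ABd, ∀ m' ∈ closure ABd, m + m' ∈ closure ABd := by
    intro m hm m' hm'
    rw [mem_closure_iff_seq_limit] at hm hm' ⊢
    obtain ⟨f, hf, hft⟩ := hm
    obtain ⟨f', hf', hft'⟩ := hm'
    exact ⟨fun n => f n + f' n, fun n => hABadd _ (hf n) _ (hf' n), hft.add hft'⟩
  have hMne : (closure ABd).Nonempty :=
    ⟨0, subset_closure ⟨0, h0A, 0, h0B, by simp⟩⟩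
  set CR : Set (E d) := {v : E d | ∃ r : ℝ, 0 ≤ r ∧ ∃ z ∈ R, v = r • z} with hCRdef
  have hCRclosed : IsClosed CR := s18_cone_closed hRc hRs
  have hCRsmul : ∀ c : ℝ, 0 < c → ∀ v ∈ CR, c • v ∈ CR := by
    rintro c hc v ⟨r, hr, z, hz, rfl⟩
    exact ⟨c * r, mul_nonneg hc.le hr, z, hz, by rw [smul_smul]⟩
  have hCRconv : Convex ℝ CR := hRconv.2
  have hCRadd : ∀ v ∈ CR, ∀ w' ∈ CR, v + w' ∈ CR := by
    intro v hv w' hw'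
    have hmid : (1/2 : ℝ) • v + (1/2 : ℝ) • w' ∈ CR :=
      hCRconv hv hw' (by norm_num) (by norm_num) (by norm_num)
    have h2 := hCRsmul 2 (by norm_num) _ hmid
    rw [smul_add, smul_smul, smul_smul] at h2
    norm_num at h2
    exact h2
  have hMmem : ∀ uu : E d, (∀ z ∈ Zb, 0 ≤ ⟪uu, z⟫) → uu ∈ closure ABd := by
    intro uu huuZ
    by_contra hnm
    obtain ⟨y, hy1, hy2⟩ := s18_sep hMsmul hMadd hMne isClosed_closure hnm
    have hyA : ∀ a ∈ Ad, 0 ≤ ⟪a, y⟫ := fun a ha =>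
      hy1 a (subset_closure ⟨a, ha, 0, h0B, by simp⟩)
    have hyB : ∀ b ∈ Bd, 0 ≤ ⟪b, y⟫ := fun b hb =>
      hy1 b (subset_closure ⟨0, h0A, b, hb, by simp⟩)
    have hyCR : y ∈ CR := by
      by_contra hyn
      obtain ⟨y₂, hy₂1, hy₂2⟩ := s18_sep hCRsmul hCRadd
        ⟨0, 0, le_refl 0, p, hpR, by simp⟩ hCRclosed hyn
      have hy₂A : y₂ ∈ Ad := by
        intro z hz
        have h2 := hy₂1 z ⟨1, by norm_num, z, hz, by simp⟩
        rwa [real_inner_comm] at h2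
      linarith [hyA y₂ hy₂A]
    have hyice : Real.sin ρ * ‖y‖ ≤ ⟪k, y⟫ :=
      s18_ice_dual hk1 hx1 hxk hcosρ hsinρ hsinρ1 (fun b hb => hyB b hb)
    obtain ⟨r, hr, z, hzR, rfl⟩ := hyCR
    rcases eq_or_lt_of_le hr with h0 | h0
    · rw [← h0, zero_smul] at hy2
      simp at hy2
    · have hz1 : ‖z‖ = 1 := s18_mem_Sph.mp (hRs hzR)
      have hzZ : z ∈ Zb := by
        rw [hsBallmem z hzR]
        rw [norm_smul, Real.norm_eq_abs, abs_of_nonneg hr, hz1, mul_one,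
          real_inner_smul_right] at hyice
        nlinarith
      have h2 := huuZ z hzZ
      rw [real_inner_smul_left] at hy2
      rw [real_inner_comm] at h2
      nlinarith
  have huM : u ∈ closure ABd := hMmem u (fun z hz => (hZuv hz).1.2)
  have hvM : v ∈ closure ABd := hMmem v (fun z hz => (hZuv hz).2.2)
  -- pairing estimates
  have hunit : ∀ m : E d, m ≠ 0 → ‖(‖m‖⁻¹ • m)‖ = 1 := by
    intro m hm
    rw [norm_smul, norm_inv, Real.norm_eq_abs, abs_norm]
    exact inv_mul_cancel₀ (norm_ne_zero_iff.mpr hm)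
  have hsqrtsin : Real.sqrt (1 - Real.cos ρ ^ 2) = Real.sin ρ := by
    rw [← Real.sin_sq]
    exact Real.sqrt_sq hsinρ.le
  have hPA : ∀ a ∈ Ad, ∀ a' ∈ Ad, c0 * (‖a‖ * ‖a'‖) ≤ ⟪a, a'⟫ := by
    intro a ha a' ha'
    rcases eq_or_ne a 0 with rfl | ha0
    · simp
    rcases eq_or_ne a' 0 with rfl | ha0'
    · simp
    have hna : (0:ℝ) < ‖a‖ := norm_pos_iff.mpr ha0
    have hna' : (0:ℝ) < ‖a'‖ := norm_pos_iff.mpr ha0'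
    have h1 : c0 ≤ ⟪‖a‖⁻¹ • a, ‖a'‖⁻¹ • a'⟫ := by
      refine hA _ (s18_mem_Sph.mpr (hunit a ha0)) ?_ _ (s18_mem_Sph.mpr (hunit a' ha0')) ?_
      · intro z hz
        rw [real_inner_smul_left]
        exact mul_nonneg (by positivity) (ha z hz)
      · intro z hz
        rw [real_inner_smul_left]
        exact mul_nonneg (by positivity) (ha' z hz)
    rw [real_inner_smul_left, real_inner_smul_right] at h1
    have h3 : (‖a‖ * ‖a'‖) * (‖a‖⁻¹ * (‖a'‖⁻¹ * ⟪a, a'⟫)) = ⟪a, a'⟫ := by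
      field_simp
    have h2 := mul_le_mul_of_nonneg_left h1 (mul_nonneg hna.le hna'.le)
    rw [h3] at h2
    calc c0 * (‖a‖ * ‖a'‖) = (‖a‖ * ‖a'‖) * c0 := by ring
      _ ≤ ⟪a, a'⟫ := h2
  have hPB : ∀ a ∈ Ad, ∀ b ∈ Bd, c0 * (‖a‖ * ‖b‖) ≤ ⟪a, b⟫ := by
    intro a ha b hb
    rcases eq_or_ne a 0 with rfl | ha0
    · simp
    rcases eq_or_ne b 0 with rfl | hb0
    · simp
    have hna : (0:ℝ) < ‖a‖ := norm_pos_iff.mpr ha0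
    have hnb : (0:ℝ) < ‖b‖ := norm_pos_iff.mpr hb0
    have haP : (‖a‖⁻¹ • a) ∈ P := by
      refine ⟨s18_mem_Sph.mpr (hunit a ha0), ?_⟩
      intro z hz
      rw [real_inner_smul_left]
      exact mul_nonneg (by positivity) (ha z hz)
    have hka : μ ≤ ⟪k, ‖a‖⁻¹ • a⟫ := hμmin _ haP
    have hbB : (‖b‖⁻¹ • b) ∈ Bd := hBsmul _ (by positivity) b hb
    have hkb : Real.cos ρ ≤ ⟪k, ‖b‖⁻¹ • b⟫ := by
      have h2 : Real.cos ρ * ‖(‖b‖⁻¹ • b)‖ ≤ ⟪k, ‖b‖⁻¹ • b⟫ := hbB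
      rwa [hunit b hb0, mul_one] at h2
    have h1 : μ * Real.cos ρ - Real.sqrt (1 - μ^2) * Real.sqrt (1 - Real.cos ρ^2) ≤
        ⟪‖a‖⁻¹ • a, ‖b‖⁻¹ • b⟫ :=
      s18_three_point hk1 (hunit a ha0) (hunit b hb0) hμ0 hcosρ.le hka hkb
    rw [hsqrtsin] at h1
    have h1' : c0 ≤ ⟪‖a‖⁻¹ • a, ‖b‖⁻¹ • b⟫ := le_trans hcond2 h1
    rw [real_inner_smul_left, real_inner_smul_right] at h1'
    have h3 : (‖a‖ * ‖b‖) * (‖a‖⁻¹ * (‖b‖⁻¹ * ⟪a, b⟫)) = ⟪a, b⟫ := by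
      field_simp
    have h2 := mul_le_mul_of_nonneg_left h1' (mul_nonneg hna.le hnb.le)
    rw [h3] at h2
    calc c0 * (‖a‖ * ‖b‖) = (‖a‖ * ‖b‖) * c0 := by ring
      _ ≤ ⟪a, b⟫ := h2
  have hPBB : ∀ b ∈ Bd, ∀ b' ∈ Bd, c0 * (‖b‖ * ‖b'‖) ≤ ⟪b, b'⟫ := by
    intro b hb b' hb'
    rcases eq_or_ne b 0 with rfl | hb0
    · simp
    rcases eq_or_ne b' 0 with rfl | hb0'
    · simp
    have hnb : (0:ℝ) < ‖b‖ := norm_pos_iff.mpr hb0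
    have hnb' : (0:ℝ) < ‖b'‖ := norm_pos_iff.mpr hb0'
    have hkb : Real.cos ρ ≤ ⟪k, ‖b‖⁻¹ • b⟫ := by
      have h2 : Real.cos ρ * ‖(‖b‖⁻¹ • b)‖ ≤ ⟪k, ‖b‖⁻¹ • b⟫ := hBsmul _ (by positivity) b hb
      rwa [hunit b hb0, mul_one] at h2
    have hkb' : Real.cos ρ ≤ ⟪k, ‖b'‖⁻¹ • b'⟫ := by
      have h2 : Real.cos ρ * ‖(‖b'‖⁻¹ • b')‖ ≤ ⟪k, ‖b'‖⁻¹ • b'⟫ := hBsmul _ (by positivity) b' hb'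
      rwa [hunit b' hb0', mul_one] at h2
    have h1 : Real.cos ρ * Real.cos ρ -
        Real.sqrt (1 - Real.cos ρ^2) * Real.sqrt (1 - Real.cos ρ^2) ≤
        ⟪‖b‖⁻¹ • b, ‖b'‖⁻¹ • b'⟫ :=
      s18_three_point hk1 (hunit b hb0) (hunit b' hb0') hcosρ.le hcosρ.le hkb hkb'
    rw [hsqrtsin] at h1
    have h1' : c0 ≤ ⟪‖b‖⁻¹ • b, ‖b'‖⁻¹ • b'⟫ := le_trans hcond1 h1
    rw [real_inner_smul_left, real_inner_smul_right] at h1'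
    have h3 : (‖b‖ * ‖b'‖) * (‖b‖⁻¹ * (‖b'‖⁻¹ * ⟪b, b'⟫)) = ⟪b, b'⟫ := by
      field_simp
    have h2 := mul_le_mul_of_nonneg_left h1' (mul_nonneg hnb.le hnb'.le)
    rw [h3] at h2
    calc c0 * (‖b‖ * ‖b'‖) = (‖b‖ * ‖b'‖) * c0 := by ring
      _ ≤ ⟪b, b'⟫ := h2
  have hpair : ∀ m ∈ ABd, ∀ m' ∈ ABd, c0 * (‖m‖ * ‖m'‖) ≤ ⟪m, m'⟫ := by
    rintro m ⟨a, ha, b, hb, rfl⟩ m' ⟨a', ha', b', hb', rfl⟩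
    have e1 := hPA a ha a' ha'
    have e2 := hPB a ha b' hb'
    have e3 : c0 * (‖b‖ * ‖a'‖) ≤ ⟪b, a'⟫ := by
      have h2 := hPB a' ha' b hb
      rw [real_inner_comm] at h2
      calc c0 * (‖b‖ * ‖a'‖) = c0 * (‖a'‖ * ‖b‖) := by ring
        _ ≤ ⟪b, a'⟫ := h2
    have e4 := hPBB b hb b' hb'
    have hexp : ⟪a + b, a' + b'⟫ = ⟪a, a'⟫ + ⟪a, b'⟫ + (⟪b, a'⟫ + ⟪b, b'⟫) := by
      rw [inner_add_left, inner_add_right, inner_add_right]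
    have hn1 : ‖a + b‖ ≤ ‖a‖ + ‖b‖ := norm_add_le a b
    have hn2 : ‖a' + b'‖ ≤ ‖a'‖ + ‖b'‖ := norm_add_le a' b'
    have hprod : ‖a + b‖ * ‖a' + b'‖ ≤ (‖a‖ + ‖b‖) * (‖a'‖ + ‖b'‖) :=
      mul_le_mul hn1 hn2 (norm_nonneg _) (by positivity)
    rw [hexp]
    nlinarith [mul_le_mul_of_nonneg_left hprod hc00]
  have hclosedW : IsClosed {q : E d × E d | c0 * (‖q.1‖ * ‖q.2‖) ≤ ⟪q.1, q.2⟫} := by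
    refine isClosed_le ?_ continuous_inner
    exact continuous_const.mul ((continuous_norm.comp continuous_fst).mul
      (continuous_norm.comp continuous_snd))
  have hWsub : closure ABd ×ˢ closure ABd ⊆
      {q : E d × E d | c0 * (‖q.1‖ * ‖q.2‖) ≤ ⟪q.1, q.2⟫} := by
    rw [← closure_prod_eq]
    refine closure_minimal ?_ hclosedW
    rintro ⟨m, m'⟩ ⟨hm, hm'⟩
    exact hpair m hm m' hm'
  have hfinal := hWsub (show (u, v) ∈ closure ABd ×ˢ closure ABd from ⟨huM, hvM⟩)
  simp only [Set.mem_setOf_eq] at hfinal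
  rw [hu1, hv1] at hfinal
  norm_num at hfinal
  exact absurd hfinal (not_le.mpr huvlt)
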